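/- Let G=(V,E) be a general dissimilarity graph, and suppose the weights of the edges in a set S⊆E can be modified (to arbitrary nonnegative values) so that G becomes a general metric graph. Then S is a regular cover of all unbalanced cycles of G, i.e., S contains at least one edge of every unbalanced cycle. Combined with sufficiency, S⊆E is a valid solution to the Generalized Metric Violation Distance problem (its weights can be modified to convert G into a general metric graph) if and only if S is a regular cover of all unbalanced cycles of G. -/

import Mathlib

open SimpleGraph

noncomputable section

variable {V : Type*}

/-- The length of a walk: the sum of the weights of its edges. -/
def wlen {G : SimpleGraph V} (w : Sym2 V → ℝ) {u v : V} (p : G.Walk u v) : ℝ :=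
  (p.edges.map w).sum

/-- The shortest-path distance between two vertices: the minimum length of a path. -/
def spDist (G : SimpleGraph V) (w : Sym2 V → ℝ) (u v : V) : ℝ :=
  sInf {x : ℝ | ∃ p : G.Walk u v, p.IsPath ∧ wlen w p = x}

/-- `(G, w)` is a general metric graph: the weight of every edge equals the
shortest-path distance between its endpoints. -/
def IsMetricGraph (G : SimpleGraph V) (w : Sym2 V → ℝ) : Prop :=
  ∀ u v : V, G.Adj u v → w s(u, v) = spDist G w u v

/-- `e` is a top edge of the closed walk `p`: it lies on `p` and its weight strictly
exceeds the sum of the weights of all the other edges of `p`. -/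
def IsTopEdge {G : SimpleGraph V} (w : Sym2 V → ℝ) {v : V} (p : G.Walk v v)
    (e : Sym2 V) : Prop :=
  e ∈ p.edges ∧ (p.edges.map w).sum - w e < w e

/-- A cycle is unbalanced if it has a top edge. -/
def IsUnbalanced {G : SimpleGraph V} (w : Sym2 V → ℝ) {v : V} (p : G.Walk v v) : Prop :=
  ∃ e, IsTopEdge w p e

/-- `S` is a regular cover of all unbalanced cycles of `G`:
it contains at least one edge of every unbalanced cycle. -/
def RegularCover (G : SimpleGraph V) (w : Sym2 V → ℝ) (S : Set (Sym2 V)) : Prop :=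
  ∀ (v : V) (p : G.Walk v v), p.IsCycle → IsUnbalanced w p → ∃ e ∈ p.edges, e ∈ S

/-- `S` is a non-top cover of all unbalanced cycles of `G`:
it contains at least one non-top edge of every unbalanced cycle. -/
def NonTopCover (G : SimpleGraph V) (w : Sym2 V → ℝ) (S : Set (Sym2 V)) : Prop :=
  ∀ (v : V) (p : G.Walk v v), p.IsCycle → IsUnbalanced w p →
    ∃ e ∈ p.edges, e ∈ S ∧ ¬ IsTopEdge w p e

section Helpers

variable {G : SimpleGraph V} {f : Sym2 V → ℝ}

lemma wlen_nonneg (hf : ∀ e ∈ G.edgeSet, 0 ≤ f e) {u v : V} (p : G.Walk u v) :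
    0 ≤ wlen f p := by
  apply List.sum_nonneg
  intro x hx
  obtain ⟨e, he, rfl⟩ := List.mem_map.1 hx
  exact hf e (p.edges_subset_edgeSet he)

lemma wlen_cons {u x v : V} (h : G.Adj u x) (p : G.Walk x v) :
    wlen f (Walk.cons h p) = f s(u, x) + wlen f p := by
  simp [wlen]

lemma wlen_append {u x v : V} (p : G.Walk u x) (q : G.Walk x v) :
    wlen f (p.append q) = wlen f p + wlen f q := by
  simp [wlen, Walk.edges_append]

lemma wlen_reverse {u v : V} (p : G.Walk u v) : wlen f p.reverse = wlen f p := by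
  simp [wlen, Walk.edges_reverse, List.map_reverse, List.sum_reverse]

lemma single_le_wlen (hf : ∀ e ∈ G.edgeSet, 0 ≤ f e) {u v : V} {p : G.Walk u v}
    {e : Sym2 V} (he : e ∈ p.edges) : f e ≤ wlen f p :=
  List.single_le_sum
    (fun x hx => by
      obtain ⟨e', he', rfl⟩ := List.mem_map.1 hx
      exact hf e' (p.edges_subset_edgeSet he')) _ (List.mem_map_of_mem (f := f) he)

lemma edges_dropUntil_sublist [DecidableEq V] {u v w : V} (p : G.Walk v w) (h : u ∈ p.support) :
    List.Sublist (p.dropUntil u h).edges p.edges := by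
  conv_rhs => rw [← p.take_spec h]
  rw [Walk.edges_append]
  exact List.sublist_append_right _ _

lemma edges_bypass_sublist [DecidableEq V] {u v : V} (p : G.Walk u v) : List.Sublist p.bypass.edges p.edges := by
  induction p with
  | nil => simp [Walk.bypass]
  | cons h p ih =>
    simp only [Walk.bypass]
    split_ifs with hb
    · exact (edges_dropUntil_sublist _ _).trans (ih.trans (List.sublist_cons_self _ _))
    · rw [Walk.edges_cons, Walk.edges_cons]
      exact ih.cons₂ _

lemma wlen_bypass_le [DecidableEq V] (hf : ∀ e ∈ G.edgeSet, 0 ≤ f e) {u v : V} (p : G.Walk u v) :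
    wlen f p.bypass ≤ wlen f p :=
  List.Sublist.sum_le_sum ((edges_bypass_sublist p).map f)
    (fun x hx => by
      obtain ⟨e', he', rfl⟩ := List.mem_map.1 hx
      exact hf e' (p.edges_subset_edgeSet he'))

lemma spSet_nonempty [DecidableEq V] (hconn : G.Connected) (u v : V) :
    {x : ℝ | ∃ p : G.Walk u v, p.IsPath ∧ wlen f p = x}.Nonempty := by
  obtain ⟨q⟩ := hconn u v
  exact ⟨wlen f q.bypass, q.bypass, q.bypass_isPath, rfl⟩

lemma spSet_bddBelow (hf : ∀ e ∈ G.edgeSet, 0 ≤ f e) (u v : V) :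
    BddBelow {x : ℝ | ∃ p : G.Walk u v, p.IsPath ∧ wlen f p = x} :=
  ⟨0, fun _ ⟨p, _, hx⟩ => hx ▸ wlen_nonneg hf p⟩

lemma spDist_le_wlen [DecidableEq V] (hf : ∀ e ∈ G.edgeSet, 0 ≤ f e) {u v : V} (p : G.Walk u v) :
    spDist G f u v ≤ wlen f p :=
  (csInf_le (spSet_bddBelow hf u v) ⟨p.bypass, p.bypass_isPath, rfl⟩).trans
    (wlen_bypass_le hf p)

lemma spDist_nonneg (hf : ∀ e ∈ G.edgeSet, 0 ≤ f e) (u v : V) :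
    0 ≤ spDist G f u v :=
  Real.sInf_nonneg fun _ ⟨p, _, hx⟩ => hx ▸ wlen_nonneg hf p

lemma spDist_self_nonpos [DecidableEq V] (hf : ∀ e ∈ G.edgeSet, 0 ≤ f e) (u : V) :
    spDist G f u u ≤ 0 := by
  have : wlen f (Walk.nil : G.Walk u u) = 0 := by simp [wlen]
  exact this ▸ spDist_le_wlen hf _

lemma spDist_comm (u v : V) : spDist G f u v = spDist G f v u := by
  unfold spDist
  congr 1
  ext x
  constructor <;> rintro ⟨p, hp, rfl⟩ <;>
    exact ⟨p.reverse, hp.reverse, wlen_reverse p⟩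

lemma spDist_triangle [DecidableEq V] (hf : ∀ e ∈ G.edgeSet, 0 ≤ f e) (hconn : G.Connected)
    (u x v : V) : spDist G f u v ≤ spDist G f u x + spDist G f x v := by
  have key : ∀ a ∈ {y : ℝ | ∃ p : G.Walk u x, p.IsPath ∧ wlen f p = y},
      ∀ b ∈ {y : ℝ | ∃ p : G.Walk x v, p.IsPath ∧ wlen f p = y},
      spDist G f u v ≤ a + b := by
    rintro a ⟨p, _, rfl⟩ b ⟨q, _, rfl⟩
    rw [← wlen_append]
    exact spDist_le_wlen hf _
  have h1 : spDist G f u v - spDist G f u x ≤ spDist G f x v := by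
    apply le_csInf (spSet_nonempty hconn x v)
    intro b hb
    have h2 : spDist G f u v - b ≤ spDist G f u x := by
      apply le_csInf (spSet_nonempty hconn u x)
      intro a ha
      have := key a ha b hb
      linarith
    linarith
  linarith

lemma exists_path_lt [DecidableEq V] (hconn : G.Connected) {u v : V} {b : ℝ}
    (h : spDist G f u v < b) : ∃ p : G.Walk u v, p.IsPath ∧ wlen f p < b := by
  obtain ⟨x, ⟨p, hp, rfl⟩, hx⟩ := exists_lt_of_csInf_lt (spSet_nonempty hconn u v) h
  exact ⟨p, hp, hx⟩

lemma walk_split {a b : V} : ∀ {u v : V} (q : G.Walk u v), s(a, b) ∈ q.edges →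
    (∃ (q₁ : G.Walk u a) (q₂ : G.Walk b v),
        q.edges.Perm (s(a, b) :: (q₁.edges ++ q₂.edges))) ∨
    (∃ (q₁ : G.Walk u b) (q₂ : G.Walk a v),
        q.edges.Perm (s(a, b) :: (q₁.edges ++ q₂.edges))) := by
  intro u v q
  induction q with
  | nil => simp
  | @cons u x v h t ih =>
    intro hmem
    rw [Walk.edges_cons, List.mem_cons] at hmem
    rcases hmem with heq | hmem
    · rcases Sym2.eq_iff.1 heq.symm with ⟨rfl, rfl⟩ | ⟨rfl, rfl⟩
      · exact Or.inl ⟨Walk.nil, t, by simp⟩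
      · exact Or.inr ⟨Walk.nil, t, by rw [Sym2.eq_swap]; simp⟩
    · rcases ih hmem with ⟨q₁, q₂, hperm⟩ | ⟨q₁, q₂, hperm⟩
      · refine Or.inl ⟨Walk.cons h q₁, q₂, ?_⟩
        rw [Walk.edges_cons, Walk.edges_cons, List.cons_append]
        exact (hperm.cons _).trans (List.Perm.swap _ _ _)
      · refine Or.inr ⟨Walk.cons h q₁, q₂, ?_⟩
        rw [Walk.edges_cons, Walk.edges_cons, List.cons_append]
        exact (hperm.cons _).trans (List.Perm.swap _ _ _)

lemma cycle_split {v a b : V} (q : G.Walk v v) (hmem : s(a, b) ∈ q.edges) :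
    ∃ r : G.Walk a b, q.edges.Perm (s(a, b) :: r.edges) := by
  rcases walk_split q hmem with ⟨q₁, q₂, hp⟩ | ⟨q₁, q₂, hp⟩
  · refine ⟨(q₂.append q₁).reverse, hp.trans (List.Perm.cons _ ?_)⟩
    rw [Walk.edges_reverse, Walk.edges_append]
    exact List.perm_append_comm.trans (List.reverse_perm _).symm
  · refine ⟨q₂.append q₁, hp.trans (List.Perm.cons _ ?_)⟩
    rw [Walk.edges_append]
    exact List.perm_append_comm

end Helpers

/-- `S ⊆ E` is a valid solution to the Generalized Metric Violation Distance
problem (its weights can be modified, to arbitrary nonnegative values, so that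
`G` becomes a general metric graph) if and only if `S` is a regular cover of
all unbalanced cycles of `G`. -/
theorem stmt4 [Fintype V] (G : SimpleGraph V) (hconn : G.Connected)
    (w : Sym2 V → ℝ) (hw : ∀ e ∈ G.edgeSet, 0 < w e)
    (S : Set (Sym2 V)) (hSE : S ⊆ G.edgeSet) :
    (∃ w' : Sym2 V → ℝ,
      (∀ e ∈ G.edgeSet, 0 ≤ w' e) ∧
      (∀ e ∈ G.edgeSet, e ∉ S → w' e = w e) ∧
      IsMetricGraph G w') ↔ RegularCover G w S := by
  classical
  constructor
  · rintro ⟨w', hw'0, hw'eq, hmet⟩ v p hcyc ⟨e, hetop⟩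
    by_contra hno
    push_neg at hno
    have hps : ∀ f ∈ p.edges, w' f = w f := fun f hf =>
      hw'eq f (p.edges_subset_edgeSet hf) (hno f hf)
    revert hetop
    induction e using Sym2.ind with
    | _ a b =>
    intro hetop
    have hadj : G.Adj a b := p.adj_of_mem_edges hetop.1
    obtain ⟨r, hperm⟩ := cycle_split p hetop.1
    have hsum : (p.edges.map w).sum = w s(a, b) + wlen w r := by
      have := (hperm.map w).sum_eq
      simpa [wlen] using this
    have hrmem : ∀ f ∈ r.edges, f ∈ p.edges := fun f hf =>
      (hperm.mem_iff).2 (List.mem_cons_of_mem _ hf)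
    have hrw : wlen w' r = wlen w r := by
      unfold wlen
      congr 1
      exact List.map_congr_left fun f hf => hps f (hrmem f hf)
    have h1 : spDist G w' a b ≤ wlen w' r := spDist_le_wlen hw'0 r
    have h2 : w' s(a, b) = spDist G w' a b := hmet a b hadj
    have h3 : w' s(a, b) = w s(a, b) := hps _ hetop.1
    have h4 := hetop.2
    linarith
  · intro hRC
    set M : ℝ := ∑ e ∈ (Set.toFinite G.edgeSet).toFinset, w e with hMdef
    have hMe : ∀ e ∈ G.edgeSet, w e ≤ M := by
      intro e he
      exact Finset.single_le_sum (f := w)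
        (fun f hf => (hw f ((Set.Finite.mem_toFinset _).1 hf)).le)
        ((Set.Finite.mem_toFinset _).2 he)
    have hM0 : 0 ≤ M :=
      Finset.sum_nonneg fun f hf => (hw f ((Set.Finite.mem_toFinset _).1 hf)).le
    set w'' : Sym2 V → ℝ := fun e => if e ∈ S then M else w e with hw''def
    have hS : ∀ e ∈ S, w'' e = M := fun e he => if_pos he
    have hnS : ∀ e ∉ S, w'' e = w e := fun e he => if_neg he
    have hw''0 : ∀ e ∈ G.edgeSet, 0 ≤ w'' e := by
      intro e he
      by_cases h : e ∈ S
      · rw [hS e h]; exact hM0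
      · rw [hnS e h]; exact (hw e he).le
    have hw''ge : ∀ e ∈ G.edgeSet, w e ≤ w'' e := by
      intro e he
      by_cases h : e ∈ S
      · rw [hS e h]; exact hMe e he
      · rw [hnS e h]
    have key : ∀ a b : V, G.Adj a b → s(a, b) ∉ S → spDist G w'' a b = w s(a, b) := by
      intro a b hadj hsab
      have hedge : s(a, b) ∈ G.edgeSet := hadj
      have hle : spDist G w'' a b ≤ w s(a, b) := by
        have h1 := spDist_le_wlen hw''0 (Walk.cons hadj (Walk.nil : G.Walk b b))
        simpa [wlen, hnS _ hsab] using h1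
      refine le_antisymm hle ?_
      by_contra hlt
      push_neg at hlt
      obtain ⟨p, hp, hplen⟩ := exists_path_lt hconn hlt
      by_cases hep : s(a, b) ∈ p.edges
      · have h2 := single_le_wlen hw''0 hep
        rw [hnS _ hsab] at h2
        linarith
      · have hcyc : (Walk.cons hadj.symm p).IsCycle := by
          rw [Walk.cons_isCycle_iff]
          exact ⟨hp, by rwa [Sym2.eq_swap]⟩
        have hwle : (p.edges.map w).sum ≤ wlen w'' p :=
          List.sum_le_sum fun f hf => hw''ge f (p.edges_subset_edgeSet hf)
        have hce : (Walk.cons hadj.symm p).edges = s(b, a) :: p.edges := rfl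
        have hba : s(b, a) = s(a, b) := Sym2.eq_swap
        have hunb : IsUnbalanced w (Walk.cons hadj.symm p) := by
          refine ⟨s(b, a), ⟨by rw [hce]; exact List.mem_cons_self, ?_⟩⟩
          rw [hce, List.map_cons, List.sum_cons, hba]
          have : (p.edges.map w).sum < w s(a, b) := lt_of_le_of_lt hwle hplen
          linarith
        obtain ⟨f, hfc, hfS⟩ := hRC b _ hcyc hunb
        rw [hce, List.mem_cons] at hfc
        rcases hfc with rfl | hfp
        · rw [hba] at hfS
          exact hsab hfS
        · have h1 : w'' f = M := hS f hfS
          have h2 := single_le_wlen hw''0 hfp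
          rw [h1] at h2
          have h3 : w s(a, b) ≤ M := hMe _ hedge
          linarith
    set w' : Sym2 V → ℝ :=
      Sym2.lift ⟨fun a b => spDist G w'' a b, fun a b => spDist_comm a b⟩ with hw'def
    have hw'mk : ∀ a b : V, w' s(a, b) = spDist G w'' a b := fun a b => rfl
    have hw'nonneg : ∀ e : Sym2 V, 0 ≤ w' e := by
      intro e
      induction e using Sym2.ind with
      | _ a b => rw [hw'mk]; exact spDist_nonneg hw''0 a b
    refine ⟨w', fun e _ => hw'nonneg e, ?_, ?_⟩
    · intro e he heS
      revert he heS
      induction e using Sym2.ind with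
      | _ a b =>
      intro he heS
      rw [hw'mk]
      exact key a b ((SimpleGraph.mem_edgeSet G).1 he) heS
    · intro u v hadj
      rw [hw'mk]
      have hle : spDist G w' u v ≤ spDist G w'' u v := by
        have h1 := spDist_le_wlen (fun e _ => hw'nonneg e)
          (Walk.cons hadj (Walk.nil : G.Walk v v))
        simpa [wlen, hw'mk] using h1
      have hge : ∀ {x y : V} (p : G.Walk x y), spDist G w'' x y ≤ wlen w' p := by
        intro x y p
        induction p with
        | nil => simpa [wlen] using spDist_self_nonpos hw''0 _
        | @cons x z y h t ih =>
          rw [wlen_cons, hw'mk]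
          have htri := spDist_triangle hw''0 hconn x z y
          linarith
      have hge' : spDist G w'' u v ≤ spDist G w' u v :=
        le_csInf (spSet_nonempty hconn u v) (by rintro x ⟨p, hp, rfl⟩; exact hge p)
      linarith
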